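/- Let X be a finite set with a distinguished element x₀ and Y a finite set. Let W assign to each x ∈ X a pmf W(·|x) on Y with W(y|x₀) > 0 for all y, let P̃ᴬ be a pmf on X with P̃ᴬ(x₀) = 0, and let Pᴮ be a pmf on X. For (μ₁,μ₂) ∈ ℝ² define P^{μ₁,μ₂} : X × Y → ℝ by P^{μ₁,μ₂}(x,y) = ((1−μ₁)(1−μ₂)·1{x = x₀} + (1−μ₁)·μ₂·P̃ᴬ(x) + μ₁·Pᴮ(x))·W(y|x), and let I(μ₁,μ₂) denote the mutual information of P^{μ₁,μ₂}. Then the map μ₂ ↦ I(0, μ₂) has a derivative at μ₂ = 0, equal to ∑_{x∈X} P̃ᴬ(x)·D(W(·|x) ‖ W(·|x₀)). -/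

import Mathlib

open Real

/-- Kullback–Leibler divergence of finite-alphabet "distributions" `p`, `q`. -/
noncomputable def klDiv {Z : Type*} [Fintype Z] (p q : Z → ℝ) : ℝ :=
  ∑ z, p z * (Real.log (p z) - Real.log (q z))

/-- Mutual information of a joint function `P` on a product of finite alphabets. -/
noncomputable def mutualInfo {U Y : Type*} [Fintype U] [Fintype Y] (P : U → Y → ℝ) : ℝ :=
  ∑ u, ∑ y, P u y *
    (Real.log (P u y) - Real.log (∑ y', P u y') - Real.log (∑ u', P u' y))

theorem stmt_3 {X Y : Type*} [Fintype X] [Fintype Y] [DecidableEq X]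
    (x₀ : X) (W : X → Y → ℝ)
    (hW0 : ∀ x y, 0 ≤ W x y) (hW1 : ∀ x, ∑ y, W x y = 1)
    (hWpos : ∀ y, 0 < W x₀ y)
    (PtA PB : X → ℝ)
    (hPtA0 : ∀ x, 0 ≤ PtA x) (hPtA1 : ∑ x, PtA x = 1) (hPtAx0 : PtA x₀ = 0)
    (hPB0 : ∀ x, 0 ≤ PB x) (hPB1 : ∑ x, PB x = 1)
    (I : ℝ → ℝ → ℝ)
    (hI : ∀ μ₁ μ₂, I μ₁ μ₂ = mutualInfo (fun (x : X) (y : Y) =>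
      ((1 - μ₁) * (1 - μ₂) * (if x = x₀ then 1 else 0)
        + (1 - μ₁) * μ₂ * PtA x + μ₁ * PB x) * W x y)) :
    HasDerivAt (fun μ₂ => I 0 μ₂) (∑ x, PtA x * klDiv (W x) (W x₀)) 0 := by
  classical
  set A : Y → ℝ := fun y => ∑ x, PtA x * W x y with hA
  set G : ℝ → Y → ℝ := fun μ y => (1 - μ) * W x₀ y + μ * A y with hG
  set c : ℝ → X → ℝ := fun μ x => (1 - μ) * (if x = x₀ then 1 else 0) + μ * PtA x with hc
  have hG0 : ∀ y, G 0 y = W x₀ y := by intro y; simp [hG]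
  have hc0 : ∀ x, c 0 x = (if x = x₀ then 1 else 0) := by intro x; simp [hc]
  -- Step 1: rewrite I 0 μ in a differentiable-friendly form
  have key : ∀ μ : ℝ, I 0 μ =
      ∑ x, ∑ y, c μ x * W x y * (Real.log (W x y) - Real.log (G μ y)) := by
    intro μ
    rw [hI, mutualInfo]
    refine Finset.sum_congr rfl fun x _ => Finset.sum_congr rfl fun y _ => ?_
    have hcoef : ∀ x : X, ((1 - (0:ℝ)) * (1 - μ) * (if x = x₀ then 1 else 0)
        + (1 - 0) * μ * PtA x + 0 * PB x) = c μ x := by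
      intro x; simp [hc]
    simp only [hcoef]
    have hrow : (∑ y', c μ x * W x y') = c μ x := by
      rw [← Finset.mul_sum, hW1, mul_one]
    have hcol : (∑ x', c μ x' * W x' y) = G μ y := by
      simp only [hc, hG, add_mul, Finset.sum_add_distrib, mul_assoc]
      rw [← Finset.mul_sum, ← Finset.mul_sum]
      congr 1
      congr 1
      rw [Finset.sum_congr rfl (fun x' _ => ite_mul (x' = x₀) 1 0 (W x' y))]
      simp only [one_mul, zero_mul]
      rw [Finset.sum_ite_eq' Finset.univ x₀ (fun x' => W x' y)]
      simp
    rw [hrow, hcol]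
    rcases eq_or_ne (c μ x) 0 with h | h
    · simp [h]
    rcases eq_or_ne (W x y) 0 with h2 | h2
    · simp [h2]
    rw [Real.log_mul h h2]
    ring
  -- derivative data
  have hGd : ∀ y, HasDerivAt (fun μ => G μ y) (A y - W x₀ y) 0 := by
    intro y
    have h1 : HasDerivAt (fun μ : ℝ => (1 - μ) * W x₀ y) ((-1) * W x₀ y) 0 :=
      ((hasDerivAt_id (0:ℝ)).const_sub 1).mul_const _
    have h2 : HasDerivAt (fun μ : ℝ => μ * A y) (1 * A y) 0 :=
      (hasDerivAt_id (0:ℝ)).mul_const _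
    have := h1.fun_add h2
    refine this.congr_deriv ?_
    ring
  have hlog : ∀ y, HasDerivAt (fun μ => Real.log (G μ y))
      ((A y - W x₀ y) / W x₀ y) 0 := by
    intro y
    have := (hGd y).log (by rw [hG0]; exact (hWpos y).ne')
    rwa [hG0] at this
  have hcd : ∀ x, HasDerivAt (fun μ => c μ x)
      (PtA x - (if x = x₀ then 1 else 0)) 0 := by
    intro x
    have h1 : HasDerivAt (fun μ : ℝ => (1 - μ) * (if x = x₀ then 1 else 0))
        ((-1) * (if x = x₀ then 1 else 0)) 0 :=
      ((hasDerivAt_id (0:ℝ)).const_sub 1).mul_const _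
    have h2 : HasDerivAt (fun μ : ℝ => μ * PtA x) (1 * PtA x) 0 :=
      (hasDerivAt_id (0:ℝ)).mul_const _
    have := h1.fun_add h2
    refine this.congr_deriv ?_
    ring
  set D : X → Y → ℝ := fun x y =>
    (PtA x - (if x = x₀ then 1 else 0)) * W x y * (Real.log (W x y) - Real.log (W x₀ y))
      - (if x = x₀ then 1 else 0) * W x y * ((A y - W x₀ y) / W x₀ y) with hD
  have hterm : ∀ x y, HasDerivAt
      (fun μ => c μ x * W x y * (Real.log (W x y) - Real.log (G μ y))) (D x y) 0 := by
    intro x y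
    have h := ((hcd x).mul_const (W x y)).fun_mul
      ((hasDerivAt_const (0:ℝ) (Real.log (W x y))).fun_sub (hlog y))
    refine h.congr_deriv ?_
    rw [hG0, hc0, hD]
    ring
  have hsum : HasDerivAt
      (fun μ => ∑ x, ∑ y, c μ x * W x y * (Real.log (W x y) - Real.log (G μ y)))
      (∑ x, ∑ y, D x y) 0 := by
    apply HasDerivAt.fun_sum
    intro x _
    apply HasDerivAt.fun_sum
    intro y _
    exact hterm x y
  -- Step 3: identify the derivative value
  have hval : (∑ x, ∑ y, D x y) = ∑ x, PtA x * klDiv (W x) (W x₀) := by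
    have hsplit : ∀ x y, D x y =
        PtA x * (W x y * (Real.log (W x y) - Real.log (W x₀ y)))
        - (if x = x₀ then 1 else 0) * (W x y * (Real.log (W x y) - Real.log (W x₀ y)))
        - (if x = x₀ then 1 else 0) * (W x y * ((A y - W x₀ y) / W x₀ y)) := by
      intro x y; rw [hD]; ring
    simp only [hsplit, Finset.sum_sub_distrib, ← Finset.mul_sum]
    have h2 : (∑ x, (if x = x₀ then 1 else 0) *
        ∑ y, W x y * (Real.log (W x y) - Real.log (W x₀ y))) = 0 := by
      rw [Finset.sum_congr rfl (fun x _ => ite_mul (x = x₀) 1 0 _)]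
      simp only [one_mul, zero_mul]
      rw [Finset.sum_ite_eq' Finset.univ x₀]
      simp
    have h3 : (∑ x, (if x = x₀ then 1 else 0) *
        ∑ y, W x y * ((A y - W x₀ y) / W x₀ y)) = 0 := by
      rw [Finset.sum_congr rfl (fun x _ => ite_mul (x = x₀) 1 0 _)]
      simp only [one_mul, zero_mul]
      rw [Finset.sum_ite_eq' Finset.univ x₀]
      have : ∀ y, W x₀ y * ((A y - W x₀ y) / W x₀ y) = A y - W x₀ y := by
        intro y
        rw [mul_comm, div_mul_cancel₀ _ (hWpos y).ne']
      simp only [Finset.mem_univ, if_true, one_mul, this, Finset.sum_sub_distrib, hW1]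
      have : (∑ y, A y) = 1 := by
        rw [hA]
        rw [Finset.sum_comm]
        simp_rw [← Finset.mul_sum, hW1, mul_one, hPtA1]
      rw [this]; ring
    rw [h2, h3]
    simp [klDiv]
  have hfun : (fun μ₂ => I 0 μ₂) =
      fun μ => ∑ x, ∑ y, c μ x * W x y * (Real.log (W x y) - Real.log (G μ y)) :=
    funext key
  rw [hfun, ← hval]
  exact hsum
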